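/- Let A be an index type and a : (A →₀ ℕ) → ℝ a positive function with a_0 = 1. Suppose there exist e ∈ ℕ and a function A' : ℕ → ℝ with A'(k) > 0 for all k, such that for all p, q ∈ ℕ with p ≥ q + e and all f, g : (A →₀ ℕ) → ℂ with ‖f‖_q < ∞ and ‖g‖_p < ∞ one has ‖f*g‖_p ≤ A'(p−q) · ‖f‖_q · ‖g‖_p. Then a is superexponential, i.e. a_α · a_β ≤ a_{α+β} for all α, β ∈ A →₀ ℕ. -/

import Mathlib

open scoped ENNReal

/-- The convolution (Cauchy product) of two families indexed by the free commutative
monoid `A →₀ ℕ`, i.e. multiplication in `MvPowerSeries A ℂ`. -/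
noncomputable def conv {A : Type*} [DecidableEq A] (f g : (A →₀ ℕ) → ℂ) : (A →₀ ℕ) → ℂ :=
  fun γ => ∑ x ∈ Finset.HasAntidiagonal.antidiagonal γ, f x.1 * g x.2

/-- The squared weighted `ℓ²`-norm `‖f‖_p² = ∑' α, |f α|² a α ^ (-p)`, as a sum in `[0,∞]`. -/
noncomputable def wsum {A : Type*} (a : (A →₀ ℕ) → ℝ) (p : ℕ) (f : (A →₀ ℕ) → ℂ) : ℝ≥0∞ :=
  ∑' α, ENNReal.ofReal (‖f α‖ ^ 2 / (a α) ^ p)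

/-- The weighted `ℓ²`-norm `‖f‖_p`, with values in `[0,∞]`. -/
noncomputable def wnorm {A : Type*} (a : (A →₀ ℕ) → ℝ) (p : ℕ) (f : (A →₀ ℕ) → ℂ) : ℝ≥0∞ :=
  (wsum a p f) ^ (2⁻¹ : ℝ)

lemma aux_le_one_of_pow_le {r C : ℝ} (hr : 0 < r) (h : ∀ q : ℕ, r ^ q ≤ C) : r ≤ 1 := by
  by_contra hr1
  push_neg at hr1
  obtain ⟨n, hn⟩ := exists_nat_gt ((C - 1) / (r - 1))
  have hr1' : 0 < r - 1 := by linarith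
  have h1 : C - 1 < n * (r - 1) := by
    rw [div_lt_iff₀ hr1'] at hn
    linarith
  have h2 : 1 + (n : ℝ) * (r - 1) ≤ r ^ n := by
    have := one_add_mul_le_pow (a := r - 1) (by linarith) n
    simpa using this
  have := h n
  linarith

/-- If a positive function `a` with `a 0 = 1` admits a Våge-type inequality
`‖f * g‖_p ≤ A' (p - q) ⬝ ‖f‖_q ⬝ ‖g‖_p` for all `p ≥ q + e`, then `a` is
superexponential. -/
theorem superexponential_of_vage_inequality {A : Type*} [DecidableEq A]
    (a : (A →₀ ℕ) → ℝ)
    (hpos : ∀ α, 0 < a α) (h0 : a 0 = 1)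
    (e : ℕ) (A' : ℕ → ℝ) (hA' : ∀ k, 0 < A' k)
    (hineq : ∀ p q : ℕ, q + e ≤ p → ∀ f g : (A →₀ ℕ) → ℂ,
      wsum a q f < ⊤ → wsum a p g < ⊤ →
      wnorm a p (conv f g) ≤ ENNReal.ofReal (A' (p - q)) * wnorm a q f * wnorm a p g) :
    ∀ α β : A →₀ ℕ, a α * a β ≤ a (α + β) := by
  classical
  intro α β
  set δ : (A →₀ ℕ) → (A →₀ ℕ) → ℂ := fun μ γ => if γ = μ then 1 else 0 with hδ
  have hwsum : ∀ (p : ℕ) (μ : A →₀ ℕ), wsum a p (δ μ) = ENNReal.ofReal ((a μ ^ p)⁻¹) := by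
    intro p μ
    unfold wsum
    rw [tsum_eq_single μ]
    · simp [hδ, one_div]
    · intro γ hγ
      simp [hδ, hγ]
  have hconv : conv (δ α) (δ β) = δ (α + β) := by
    funext γ
    unfold conv
    have key : ∀ x : (A →₀ ℕ) × (A →₀ ℕ), δ α x.1 * δ β x.2 =
        if x = (α, β) then 1 else 0 := by
      intro x
      simp only [hδ, Prod.ext_iff, ite_and, mul_ite, mul_one, mul_zero]
      split_ifs <;> simp_all
    rw [Finset.sum_congr rfl (fun x _ => key x), Finset.sum_ite_eq' _ (α, β) (fun _ => (1 : ℂ))]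
    simp [hδ, Finset.mem_antidiagonal, eq_comm]
  have hx := hpos α
  have hy := hpos β
  have hz := hpos (α + β)
  -- key real inequality for every q
  have main : ∀ q : ℕ, (a α * a β / a (α + β)) ^ q ≤
      A' e ^ 2 * a (α + β) ^ e / a β ^ e := by
    intro q
    have hf : wsum a q (δ α) < ⊤ := by rw [hwsum]; exact ENNReal.ofReal_lt_top
    have hg : wsum a (q + e) (δ β) < ⊤ := by rw [hwsum]; exact ENNReal.ofReal_lt_top
    have H := hineq (q + e) q (le_refl _) (δ α) (δ β) hf hg
    rw [hconv] at H
    have hsub : q + e - q = e := by omega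
    rw [hsub] at H
    -- square both sides
    have H2 := ENNReal.rpow_le_rpow H (by norm_num : (0:ℝ) ≤ 2)
    have lhs_sq : ∀ (p : ℕ) (μ : A →₀ ℕ), (wnorm a p (δ μ)) ^ (2:ℝ) = wsum a p (δ μ) := by
      intro p μ
      rw [wnorm, ← ENNReal.rpow_mul]
      norm_num
    rw [ENNReal.mul_rpow_of_nonneg _ _ (by norm_num : (0:ℝ) ≤ 2),
        ENNReal.mul_rpow_of_nonneg _ _ (by norm_num : (0:ℝ) ≤ 2),
        lhs_sq, lhs_sq, lhs_sq, ENNReal.ofReal_rpow_of_pos (hA' e)] at H2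
    have hA2 : (0:ℝ) ≤ A' e ^ (2:ℝ) := Real.rpow_nonneg (hA' e).le 2
    rw [hwsum, hwsum, hwsum, ← ENNReal.ofReal_mul hA2,
        ← ENNReal.ofReal_mul (mul_nonneg hA2 (by positivity))] at H2
    have Hr : (a (α + β) ^ (q + e))⁻¹ ≤
        A' e ^ (2:ℝ) * (a α ^ q)⁻¹ * (a β ^ (q + e))⁻¹ :=
      (ENNReal.ofReal_le_ofReal_iff
        (mul_nonneg (mul_nonneg hA2 (by positivity)) (by positivity))).mp H2
    rw [show (A' e ^ (2:ℝ)) = A' e ^ (2:ℕ) by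
      rw [← Real.rpow_natCast]; norm_num] at Hr
    have h1 : a α ^ q * a β ^ (q + e) ≤ A' e ^ 2 * a (α + β) ^ (q + e) := by
      rw [inv_eq_one_div, mul_assoc, ← mul_inv, inv_eq_one_div, mul_one_div,
        div_le_div_iff₀ (by positivity) (by positivity)] at Hr
      linarith [Hr]
    rw [div_pow, div_le_div_iff₀ (by positivity) (by positivity), mul_pow]
    calc a α ^ q * a β ^ q * a β ^ e = a α ^ q * a β ^ (q + e) := by
          rw [pow_add]; ring
      _ ≤ A' e ^ 2 * a (α + β) ^ (q + e) := h1
      _ = A' e ^ 2 * a (α + β) ^ e * a (α + β) ^ q := by rw [pow_add]; ring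
  have hr : 0 < a α * a β / a (α + β) := by positivity
  have := aux_le_one_of_pow_le hr main
  rw [div_le_one (hpos (α + β))] at this
  exact this
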